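/- Let k, l ≥ 2 be natural numbers and let M = ⟨a, b | aᵏ = bˡ⟩ be the torus knot monoid, i.e. the quotient of the free monoid on two generators a, b by the congruence generated by the single relation aᵏ = bˡ. Let H = ⟨a, b | aᵏ = 1, bˡ = 1⟩ be the presented group on generators a, b with relations aᵏ = bˡ = 1, and let deg : M → ℕ be the monoid homomorphism (into ℕ under addition) with deg(a) = l and deg(b) = k. Then the map M → ℕ × H sending m to (deg m, [m]), where [m] is the image of m under the canonical homomorphism M → H, is injective. -/

import Mathlib

/-- The congruence on the free monoid on two generators generated by the single
relation `a ^ k = b ^ l`, where `a = of 0` and `b = of 1`. -/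
def torusKnotCon (k l : ℕ) : Con (FreeMonoid (Fin 2)) :=
  conGen fun x y =>
    x = FreeMonoid.of (0 : Fin 2) ^ k ∧ y = FreeMonoid.of (1 : Fin 2) ^ l

/-- The torus knot monoid `⟨a, b | a^k = b^l⟩`. -/
abbrev TorusKnotMonoid (k l : ℕ) := (torusKnotCon k l).Quotient

/-- The generator `a` of the torus knot monoid. -/
def tkA (k l : ℕ) : TorusKnotMonoid k l := (torusKnotCon k l).mk' (FreeMonoid.of 0)

/-- The generator `b` of the torus knot monoid. -/
def tkB (k l : ℕ) : TorusKnotMonoid k l := (torusKnotCon k l).mk' (FreeMonoid.of 1)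

/-- The group `H = ⟨a, b | a^k = 1, b^l = 1⟩`. -/
abbrev TorusKnotQuotientGroup (k l : ℕ) :=
  PresentedGroup ({FreeGroup.of (0 : Fin 2) ^ k, FreeGroup.of (1 : Fin 2) ^ l} :
    Set (FreeGroup (Fin 2)))

namespace TKAux

abbrev Syl := Fin 2 × ℕ

def bnd (k l : ℕ) (c : Fin 2) : ℕ := if c = 0 then k else l

lemma two_le_bnd {k l : ℕ} (hk : 2 ≤ k) (hl : 2 ≤ l) (c : Fin 2) : 2 ≤ bnd k l c := by
  unfold bnd; split <;> assumption

def ValidL (k l : ℕ) (w : List Syl) : Prop :=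
  w.Chain' (fun s t => s.1 ≠ t.1) ∧ ∀ s ∈ w, 1 ≤ s.2 ∧ s.2 < bnd k l s.1

lemma ValidL.tail {k l : ℕ} {s : Syl} {w : List Syl} (h : ValidL k l (s :: w)) :
    ValidL k l w :=
  ⟨h.1.tail, fun t ht => h.2 t (List.mem_cons_of_mem _ ht)⟩

def actR (k l : ℕ) (c : Fin 2) : ℕ × List Syl → ℕ × List Syl
  | (n, []) => (n, [(c, 1)])
  | (n, (c', e) :: rest) =>
    if c' = c then
      if e + 1 = bnd k l c then (n + 1, rest) else (n, (c, e + 1) :: rest)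
    else (n, (c, 1) :: (c', e) :: rest)

lemma actR_nil {k l : ℕ} (c : Fin 2) (n : ℕ) : actR k l c (n, []) = (n, [(c, 1)]) := rfl

lemma actR_same_hit {k l : ℕ} (c : Fin 2) (n e : ℕ) (rest : List Syl)
    (h : e + 1 = bnd k l c) : actR k l c (n, (c, e) :: rest) = (n + 1, rest) := by
  simp [actR, h]

lemma actR_same_miss {k l : ℕ} (c : Fin 2) (n e : ℕ) (rest : List Syl)
    (h : ¬ e + 1 = bnd k l c) :
    actR k l c (n, (c, e) :: rest) = (n, (c, e + 1) :: rest) := by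
  simp [actR, h]

lemma actR_diff {k l : ℕ} {c c' : Fin 2} (n e : ℕ) (rest : List Syl) (h : ¬ c' = c) :
    actR k l c (n, (c', e) :: rest) = (n, (c, 1) :: (c', e) :: rest) := by
  simp [actR, h]

lemma actR_valid {k l : ℕ} (hk : 2 ≤ k) (hl : 2 ≤ l) (c : Fin 2) (n : ℕ) {w : List Syl}
    (h : ValidL k l w) : ValidL k l (actR k l c (n, w)).2 := by
  match w with
  | [] =>
    rw [actR_nil]
    refine ⟨List.isChain_singleton _, ?_⟩
    rintro s hs
    simp only [List.mem_singleton] at hs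
    subst hs
    exact ⟨le_refl 1, lt_of_lt_of_le one_lt_two (two_le_bnd hk hl c)⟩
  | (c', e) :: rest =>
    by_cases h1 : c' = c
    · subst h1
      by_cases h2 : e + 1 = bnd k l c'
      · rw [actR_same_hit c' n e rest h2]
        exact h.tail
      · rw [actR_same_miss c' n e rest h2]
        have he : e < bnd k l c' := (h.2 (c', e) List.mem_cons_self).2
        constructor
        · have := h.1
          simp only [List.Chain'] at this ⊢
          rw [List.isChain_cons] at this ⊢
          exact this
        · rintro s hs
          rcases List.mem_cons.mp hs with rfl | hs
          · exact ⟨Nat.le_add_left 1 e, lt_of_le_of_ne (Nat.succ_le_of_lt he) h2⟩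
          · exact h.2 s (List.mem_cons_of_mem _ hs)
    · rw [actR_diff n e rest h1]
      constructor
      · simp only [List.Chain']
        rw [List.isChain_cons_cons]
        exact ⟨fun hc => h1 hc.symm, h.1⟩
      · rintro s hs
        rcases List.mem_cons.mp hs with rfl | hs
        · exact ⟨le_refl 1, lt_of_lt_of_le one_lt_two (two_le_bnd hk hl c)⟩
        · exact h.2 s hs

lemma iter_prepend {k l : ℕ} (c : Fin 2) :
    ∀ j, 1 ≤ j → j < bnd k l c → ∀ (n : ℕ) (w : List Syl),
      (∀ s ∈ w.head?, (s : Syl).1 ≠ c) →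
      (actR k l c)^[j] (n, w) = (n, (c, j) :: w) := by
  intro j
  induction j with
  | zero => intro h1; exact absurd h1 (by omega)
  | succ j ih =>
    intro _ h2 n w hw
    rcases Nat.eq_zero_or_pos j with rfl | hj
    · rw [Function.iterate_one]
      match w with
      | [] => rfl
      | (c', e) :: rest =>
        have hne : ¬ c' = c := fun h => (hw (c', e) rfl) h
        rw [actR_diff n e rest hne]
    · rw [Function.iterate_succ_apply', ih hj (by omega) n w hw]
      exact actR_same_miss c n j w (by omega)

lemma iter_absorb {k l : ℕ} (c : Fin 2) :
    ∀ d, ∀ (e n : ℕ) (w : List Syl),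
      (∀ s ∈ w.head?, (s : Syl).1 ≠ c) → 1 ≤ e → e < bnd k l c → e + d = bnd k l c →
      (actR k l c)^[d] (n, (c, e) :: w) = (n + 1, w) := by
  intro d
  induction d with
  | zero => intro e n w hw h1 h2 h3; omega
  | succ d ih =>
    intro e n w hw h1 h2 h3
    rw [Function.iterate_succ_apply]
    by_cases h4 : e + 1 = bnd k l c
    · have hd : d = 0 := by omega
      subst hd
      rw [actR_same_hit c n e w h4, Function.iterate_zero_apply]
    · rw [actR_same_miss c n e w h4]
      exact ih (e + 1) n w hw (by omega) (by omega) (by omega)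

lemma head_ne_of_valid {k l : ℕ} {c : Fin 2} {e : ℕ} {rest : List Syl}
    (h : ValidL k l ((c, e) :: rest)) : ∀ s ∈ rest.head?, (s : Syl).1 ≠ c := by
  intro s hs
  have h1 := h.1
  simp only [List.Chain'] at h1
  rw [List.isChain_cons] at h1
  exact fun hc => (h1.1 s hs) hc.symm

lemma iter_bnd {k l : ℕ} (hk : 2 ≤ k) (hl : 2 ≤ l) (c : Fin 2) (n : ℕ) {w : List Syl}
    (h : ValidL k l w) : (actR k l c)^[bnd k l c] (n, w) = (n + 1, w) := by
  have hb : 2 ≤ bnd k l c := two_le_bnd hk hl c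
  match w with
  | [] =>
    have hsplit : bnd k l c = (bnd k l c - 1) + 1 := by omega
    rw [hsplit, Function.iterate_succ_apply, actR_nil,
      iter_absorb c (bnd k l c - 1) 1 n [] (by simp) le_rfl (by omega) (by omega)]
  | (c', e) :: rest =>
    by_cases h1 : c' = c
    · subst h1
      have h1e : 1 ≤ e := (h.2 (c', e) List.mem_cons_self).1
      have hee : e < bnd k l c' := (h.2 (c', e) List.mem_cons_self).2
      have hrest := head_ne_of_valid h
      have hsplit : bnd k l c' = e + (bnd k l c' - e) := by omega
      rw [hsplit, Function.iterate_add_apply,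
        iter_absorb c' (bnd k l c' - e) e n rest hrest h1e hee (by omega),
        iter_prepend c' e h1e hee (n + 1) rest hrest]
    · have hsplit : bnd k l c = (bnd k l c - 1) + 1 := by omega
      have hhd : ∀ s ∈ ((c', e) :: rest).head?, (s : Syl).1 ≠ c := by
        intro s hs
        simp only [List.head?_cons, Option.mem_def, Option.some.injEq] at hs
        subst hs
        exact h1
      rw [hsplit, Function.iterate_succ_apply, actR_diff n e rest h1,
        iter_absorb c (bnd k l c - 1) 1 n ((c', e) :: rest) hhd le_rfl (by omega) (by omega)]
variable (k l : ℕ)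

/-- fold the rewriting actions of the letters of `u` over `x`. -/
def foldR (u : FreeMonoid (Fin 2)) (x : ℕ × List Syl) : ℕ × List Syl :=
  (FreeMonoid.toList u).foldr (actR k l) x

lemma foldR_one (x : ℕ × List Syl) : foldR k l 1 x = x := rfl

lemma foldR_of_mul (c : Fin 2) (u : FreeMonoid (Fin 2)) (x : ℕ × List Syl) :
    foldR k l (FreeMonoid.of c * u) x = actR k l c (foldR k l u x) := rfl

lemma foldR_mul (u v : FreeMonoid (Fin 2)) (x : ℕ × List Syl) :
    foldR k l (u * v) x = foldR k l u (foldR k l v x) := by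
  unfold foldR
  rw [FreeMonoid.toList_mul, List.foldr_append]

lemma foldR_pow_of (c : Fin 2) (m : ℕ) :
    ∀ x, foldR k l (FreeMonoid.of c ^ m) x = (actR k l c)^[m] x := by
  induction m with
  | zero => intro x; rfl
  | succ m ih =>
    intro x
    rw [pow_succ, foldR_mul, Function.iterate_succ_apply]
    exact ih _

section Invariance
variable {k l} (hk : 2 ≤ k) (hl : 2 ≤ l)
include hk hl

lemma foldR_valid (u : FreeMonoid (Fin 2)) {x : ℕ × List Syl} (hx : ValidL k l x.2) :
    ValidL k l (foldR k l u x).2 := by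
  induction u using FreeMonoid.inductionOn' with
  | one => exact hx
  | of_mul c u ih =>
    rw [foldR_of_mul]
    exact (actR_valid hk hl c (foldR k l u x).1 ih : _)

/-- congruence invariance of `foldR`. -/
lemma foldR_congr {u v : FreeMonoid (Fin 2)} (h : torusKnotCon k l u v) :
    ∀ x : ℕ × List Syl, ValidL k l x.2 → foldR k l u x = foldR k l v x := by
  let S : Con (FreeMonoid (Fin 2)) :=
    { r := fun u v => ∀ x : ℕ × List Syl, ValidL k l x.2 → foldR k l u x = foldR k l v x
      iseqv := ⟨fun u x _ => rfl, fun h x hx => (h x hx).symm,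
        fun h1 h2 x hx => (h1 x hx).trans (h2 x hx)⟩
      mul' := by
        intro a b c d h1 h2 x hx
        rw [foldR_mul, foldR_mul, h2 x hx, h1 _ (foldR_valid hk hl d hx)] }
  have hS : torusKnotCon k l ≤ S := by
    refine Con.conGen_le.mpr ?_
    rintro x y ⟨rfl, rfl⟩
    intro t ht
    obtain ⟨n, w⟩ := t
    have e0 := iter_bnd hk hl 0 n ht
    have e1 := iter_bnd hk hl 1 n ht
    rw [show bnd k l 0 = k from rfl] at e0
    rw [show bnd k l 1 = l from rfl] at e1
    rw [foldR_pow_of, foldR_pow_of, e0, e1]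
  exact Con.le_def.mp hS h
end Invariance

section Eval

/-- `c`-th generator of the torus knot monoid. -/
def gen (c : Fin 2) : TorusKnotMonoid k l := if c = 0 then tkA k l else tkB k l

/-- The central element `Δ = a^k = b^l`. -/
def Δm : TorusKnotMonoid k l := tkA k l ^ k

lemma gen_zero : gen k l 0 = tkA k l := rfl

lemma gen_one : gen k l 1 = tkB k l := rfl

lemma gen_mk (c : Fin 2) : gen k l c = (torusKnotCon k l).mk' (FreeMonoid.of c) := by
  fin_cases c
  · rfl
  · rfl

lemma tkA_pow_eq : tkA k l ^ k = tkB k l ^ l := by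
  unfold tkA tkB
  rw [← map_pow, ← map_pow]
  exact ((torusKnotCon k l).eq).mpr (ConGen.Rel.of _ _ ⟨rfl, rfl⟩)

lemma gen_pow_bnd (c : Fin 2) : gen k l c ^ bnd k l c = Δm k l := by
  fin_cases c
  · rfl
  · exact (tkA_pow_eq k l).symm

lemma delta_comm (c : Fin 2) : Commute (gen k l c) (Δm k l) := by
  rw [← gen_pow_bnd]
  exact Commute.pow_right (Commute.refl _) _

/-- evaluation of a normal form back into the monoid. -/
def evalM (p : ℕ × List Syl) : TorusKnotMonoid k l :=
  Δm k l ^ p.1 * (p.2.map fun s => gen k l s.1 ^ s.2).prod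

lemma evalM_act (c : Fin 2) (n : ℕ) (w : List Syl) :
    evalM k l (actR k l c (n, w)) = gen k l c * evalM k l (n, w) := by
  have hgD : ∀ m : ℕ, gen k l c * Δm k l ^ m = Δm k l ^ m * gen k l c :=
    fun m => ((delta_comm k l c).pow_right m).eq
  match w with
  | [] =>
    rw [actR_nil]
    simp only [evalM, List.map_cons, List.map_nil, List.prod_cons, List.prod_nil,
      pow_one, mul_one]
    exact (hgD n).symm
  | (c', e) :: rest =>
    by_cases h1 : c' = c
    · subst h1
      by_cases h2 : e + 1 = bnd k l c'
      · rw [actR_same_hit c' n e rest h2]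
        simp only [evalM, List.map_cons, List.prod_cons]
        calc Δm k l ^ (n + 1) * (rest.map fun s => gen k l s.1 ^ s.2).prod
            = Δm k l ^ n * (Δm k l * (rest.map fun s => gen k l s.1 ^ s.2).prod) := by
              rw [pow_succ, mul_assoc]
          _ = Δm k l ^ n * (gen k l c' ^ (e + 1) *
                (rest.map fun s => gen k l s.1 ^ s.2).prod) := by
              rw [h2, gen_pow_bnd]
          _ = Δm k l ^ n * (gen k l c' * (gen k l c' ^ e *
                (rest.map fun s => gen k l s.1 ^ s.2).prod)) := by
              rw [pow_succ', mul_assoc]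
          _ = gen k l c' * (Δm k l ^ n * (gen k l c' ^ e *
                (rest.map fun s => gen k l s.1 ^ s.2).prod)) := by
              rw [← mul_assoc, ← hgD, mul_assoc]
      · rw [actR_same_miss c' n e rest h2]
        simp only [evalM, List.map_cons, List.prod_cons]
        calc Δm k l ^ n * (gen k l c' ^ (e + 1) *
              (rest.map fun s => gen k l s.1 ^ s.2).prod)
            = Δm k l ^ n * (gen k l c' * (gen k l c' ^ e *
                (rest.map fun s => gen k l s.1 ^ s.2).prod)) := by
              rw [pow_succ', mul_assoc]
          _ = gen k l c' * (Δm k l ^ n * (gen k l c' ^ e *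
                (rest.map fun s => gen k l s.1 ^ s.2).prod)) := by
              rw [← mul_assoc, ← hgD, mul_assoc]
    · rw [actR_diff n e rest h1]
      simp only [evalM, List.map_cons, List.prod_cons, pow_one]
      rw [← mul_assoc, ← hgD, mul_assoc]

lemma evalM_foldR (u : FreeMonoid (Fin 2)) (x : ℕ × List Syl) :
    evalM k l (foldR k l u x) = (torusKnotCon k l).mk' u * evalM k l x := by
  induction u using FreeMonoid.inductionOn' with
  | one => rw [foldR_one, map_one, one_mul]
  | of_mul c u ih =>
    rw [foldR_of_mul]
    have h := evalM_act k l c (foldR k l u x).1 (foldR k l u x).2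
    rw [show ((foldR k l u x).1, (foldR k l u x).2) = foldR k l u x from rfl] at h
    rw [h, ih, map_mul, ← gen_mk, mul_assoc]

lemma evalM_base : evalM k l (0, ([] : List Syl)) = 1 := by
  simp [evalM]

lemma evalM_nf (u : FreeMonoid (Fin 2)) :
    evalM k l (foldR k l u (0, [])) = (torusKnotCon k l).mk' u := by
  rw [evalM_foldR, evalM_base, mul_one]

end Eval

section GroupSide
variable (k l : ℕ)

abbrev rels (k l : ℕ) : Set (FreeGroup (Fin 2)) :=
  {FreeGroup.of (0 : Fin 2) ^ k, FreeGroup.of (1 : Fin 2) ^ l}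

abbrev Gfam (k l : ℕ) : Fin 2 → Type := fun c => Multiplicative (ZMod (bnd k l c))

/-- image of the generators in the free product `ZMod k * ZMod l`. -/
def ψf (c : Fin 2) : Monoid.CoprodI (Gfam k l) :=
  Monoid.CoprodI.of (i := c) (Multiplicative.ofAdd (1 : ZMod (bnd k l c)))

lemma ψf_pow_bnd (c : Fin 2) : ψf k l c ^ bnd k l c = 1 := by
  rw [ψf, ← map_pow]
  have h1 : (Multiplicative.ofAdd (1 : ZMod (bnd k l c))) ^ bnd k l c = 1 := by
    rw [← ofAdd_nsmul, nsmul_eq_mul, mul_one, ZMod.natCast_self, ofAdd_zero]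
  rw [h1, map_one]

lemma ψ_rel : ∀ r ∈ rels k l, FreeGroup.lift (ψf k l) r = 1 := by
  rintro r (rfl | rfl)
  · rw [map_pow, FreeGroup.lift_apply_of]
    exact ψf_pow_bnd k l 0
  · rw [map_pow, FreeGroup.lift_apply_of]
    exact ψf_pow_bnd k l 1

/-- the homomorphism from `H` to the free product. -/
def ψ : TorusKnotQuotientGroup k l →* Monoid.CoprodI (Gfam k l) :=
  PresentedGroup.toGroup (ψ_rel k l)

lemma ψ_of (c : Fin 2) : ψ k l (PresentedGroup.of c) = ψf k l c :=
  PresentedGroup.toGroup.of _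

/-- the image of a syllable list in `H`. -/
def πW (w : List Syl) : TorusKnotQuotientGroup k l :=
  (w.map fun s => PresentedGroup.of (rels := rels k l) s.1 ^ s.2).prod

/-- a syllable as a letter of the free product. -/
def fSyl (s : Syl) : Σ c, Gfam k l c :=
  ⟨s.1, Multiplicative.ofAdd ((s.2 : ZMod (bnd k l s.1)))⟩

lemma ψ_πW (w : List Syl) :
    ψ k l (πW k l w) = (w.map fun s => Monoid.CoprodI.of (fSyl k l s).2).prod := by
  unfold πW
  rw [map_list_prod, List.map_map]
  congr 1
  refine List.map_congr_left ?_
  intro s _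
  show ψ k l (PresentedGroup.of s.1 ^ s.2) = _
  rw [map_pow, ψ_of, ψf, ← map_pow]
  congr 1
  rw [← ofAdd_nsmul, nsmul_eq_mul, mul_one]
  rfl

variable {k l} (hk : 2 ≤ k) (hl : 2 ≤ l)
include hk hl

lemma bnd_neZero (c : Fin 2) : NeZero (bnd k l c) :=
  ⟨by have := two_le_bnd hk hl c; omega⟩


/-- the reduced word in the free product corresponding to a valid syllable list. -/
def toW' (w : List Syl) (h : ValidL k l w) : Monoid.CoprodI.Word (Gfam k l) where
  toList := w.map (fSyl k l)
  ne_one := by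
    intro x hx
    rw [List.mem_map] at hx
    obtain ⟨s, hs, rfl⟩ := hx
    have h1 : 1 ≤ s.2 := (h.2 s hs).1
    have h2 : s.2 < bnd k l s.1 := (h.2 s hs).2
    haveI : NeZero (bnd k l s.1) := ⟨by omega⟩
    intro hone
    have hval := congrArg (fun x : Gfam k l s.1 => (Multiplicative.toAdd x).val) hone
    simp only [fSyl, toAdd_ofAdd, toAdd_one, ZMod.val_zero] at hval
    rw [ZMod.val_cast_of_lt h2] at hval
    change _ = ZMod.val (0 : ZMod (bnd k l s.1)) at hval
    rw [ZMod.val_zero] at hval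
    omega
  chain_ne := by
    rw [List.isChain_map]
    exact h.1

omit hk hl in
lemma toW_prod (w : List Syl) (h : ValidL k l w) :
    (toW' w h).prod = (w.map fun s => Monoid.CoprodI.of (fSyl k l s).2).prod := by
  unfold Monoid.CoprodI.Word.prod toW'
  rw [List.map_map]
  rfl

omit hk hl in
lemma fSyl_listmap_inj : ∀ w w' : List Syl, ValidL k l w → ValidL k l w' →
    w.map (fSyl k l) = w'.map (fSyl k l) → w = w' := by
  intro w
  induction w with
  | nil =>
    intro w' _ _ h
    cases w' with
    | nil => rfl
    | cons t w' => simp at h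
  | cons s w ih =>
    intro w' hv hv' h
    cases w' with
    | nil => simp at h
    | cons t w' =>
      simp only [List.map_cons, List.cons.injEq] at h
      obtain ⟨h1, h2⟩ := h
      obtain ⟨c, e⟩ := s
      obtain ⟨c', e'⟩ := t
      simp only [fSyl] at h1
      obtain ⟨hc, h1⟩ := Sigma.ext_iff.mp h1
      subst hc
      have h1' := eq_of_heq h1
      have hce : e < bnd k l c := (hv.2 _ List.mem_cons_self).2
      have hce' : e' < bnd k l c := (hv'.2 _ List.mem_cons_self).2
      have he : e = e' := by
        haveI : NeZero (bnd k l c) := ⟨by omega⟩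
        have hval : (e : ZMod (bnd k l c)) = (e' : ZMod (bnd k l c)) := h1'
        have hval2 := congrArg ZMod.val hval
        rwa [ZMod.val_cast_of_lt hce, ZMod.val_cast_of_lt hce'] at hval2
      subst he
      rw [ih w' hv.tail hv'.tail h2]

omit hk hl in
lemma word_prod_inj :
    Function.Injective (Monoid.CoprodI.Word.prod (M := Gfam k l)) := by
  have h : ∀ w : Monoid.CoprodI.Word (Gfam k l),
      w.prod = (Monoid.CoprodI.Word.equiv).symm w := fun _ => rfl
  intro w w' hw
  rw [h, h] at hw
  exact (Monoid.CoprodI.Word.equiv).symm.injective hw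

omit hk hl in
lemma piW_inj {w w' : List Syl} (h : ValidL k l w) (h' : ValidL k l w')
    (heq : πW k l w = πW k l w') : w = w' := by
  have h1 : (toW' w h).prod = (toW' w' h').prod := by
    rw [toW_prod, toW_prod, ← ψ_πW, ← ψ_πW, heq]
  have h2 := congrArg Monoid.CoprodI.Word.toList (word_prod_inj h1)
  exact fSyl_listmap_inj w w' h h' h2

end GroupSide

section Final
variable {k l : ℕ}

lemma rel_mk_eq_one : ∀ r ∈ rels k l, (QuotientGroup.mk r : TorusKnotQuotientGroup k l) = 1 :=
  fun r hr => (QuotientGroup.eq_one_iff r).mpr (Subgroup.subset_normalClosure hr)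

lemma ofA_pow_eq_one : (PresentedGroup.of (rels := rels k l) (0 : Fin 2)) ^ k = 1 := by
  rw [show PresentedGroup.of (rels := rels k l) (0 : Fin 2)
      = (QuotientGroup.mk (FreeGroup.of (0 : Fin 2)) : TorusKnotQuotientGroup k l) from rfl]
  exact rel_mk_eq_one (FreeGroup.of (0 : Fin 2) ^ k) (Set.mem_insert _ _)

lemma ofB_pow_eq_one : (PresentedGroup.of (rels := rels k l) (1 : Fin 2)) ^ l = 1 := by
  rw [show PresentedGroup.of (rels := rels k l) (1 : Fin 2)
      = (QuotientGroup.mk (FreeGroup.of (1 : Fin 2)) : TorusKnotQuotientGroup k l) from rfl]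
  exact rel_mk_eq_one (FreeGroup.of (1 : Fin 2) ^ l) (Set.mem_insert_of_mem _ rfl)

lemma of_pow_bnd_eq_one (c : Fin 2) :
    (PresentedGroup.of (rels := rels k l) c) ^ bnd k l c = 1 := by
  fin_cases c
  · exact ofA_pow_eq_one
  · exact ofB_pow_eq_one

variable (π : TorusKnotMonoid k l →* TorusKnotQuotientGroup k l)
    (hπA : π (tkA k l) = PresentedGroup.of 0)
    (hπB : π (tkB k l) = PresentedGroup.of 1)

include hπA hπB in
lemma π_gen (c : Fin 2) : π (gen k l c) = PresentedGroup.of (rels := rels k l) c := by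
  fin_cases c
  · exact hπA
  · exact hπB

include hπA hπB in
lemma π_evalM (p : ℕ × List Syl) : π (evalM k l p) = πW k l p.2 := by
  unfold evalM πW
  have hΔ : π (Δm k l) = 1 := by
    rw [Δm, map_pow, hπA]
    exact ofA_pow_eq_one
  rw [map_mul, map_pow, hΔ, one_pow, one_mul, map_list_prod, List.map_map]
  congr 1
  refine List.map_congr_left ?_
  intro s _
  show π (gen k l s.1 ^ s.2) = _
  rw [map_pow, π_gen π hπA hπB]

variable (deg : TorusKnotMonoid k l →* Multiplicative ℕ)
    (hdegA : deg (tkA k l) = Multiplicative.ofAdd l)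

include hdegA in
lemma deg_evalM (p : ℕ × List Syl) :
    Multiplicative.toAdd (deg (evalM k l p)) =
      p.1 * (k * l) +
        Multiplicative.toAdd (deg ((p.2.map fun s => gen k l s.1 ^ s.2).prod)) := by
  unfold evalM
  rw [map_mul, toAdd_mul, map_pow]
  congr 1
  rw [toAdd_pow, Δm, map_pow, hdegA, toAdd_pow, toAdd_ofAdd, smul_eq_mul, smul_eq_mul]

end Final
end TKAux

open TKAux in
/-- For `k, l ≥ 2`, the map `m ↦ (deg m, [m])` from the torus knot monoid
`M = ⟨a, b | a^k = b^l⟩` to `ℕ × H`, where `deg` is the monoid homomorphism to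
`ℕ` (under addition) with `deg a = l`, `deg b = k`, and `[m]` is the image of
`m` under the canonical homomorphism to `H = ⟨a, b | a^k = b^l = 1⟩`, is
injective. -/
theorem torusKnotMonoid_deg_class_injective (k l : ℕ) (hk : 2 ≤ k) (hl : 2 ≤ l)
    (deg : TorusKnotMonoid k l →* Multiplicative ℕ)
    (hdegA : deg (tkA k l) = Multiplicative.ofAdd l)
    (hdegB : deg (tkB k l) = Multiplicative.ofAdd k)
    (π : TorusKnotMonoid k l →* TorusKnotQuotientGroup k l)
    (hπA : π (tkA k l) = PresentedGroup.of 0)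
    (hπB : π (tkB k l) = PresentedGroup.of 1) :
    Function.Injective
      (fun m : TorusKnotMonoid k l => (Multiplicative.toAdd (deg m), π m)) := by
  intro m m' h
  obtain ⟨u, rfl⟩ := Con.mk'_surjective (c := torusKnotCon k l) m
  obtain ⟨v, rfl⟩ := Con.mk'_surjective (c := torusKnotCon k l) m'
  simp only [Prod.mk.injEq] at h
  obtain ⟨hdeg, hπ⟩ := h
  have hbase : ValidL k l ((0, ([] : List Syl))).2 := ⟨List.isChain_nil, by simp⟩
  have hpu : ValidL k l (foldR k l u (0, [])).2 := foldR_valid hk hl u hbase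
  have hpv : ValidL k l (foldR k l v (0, [])).2 := foldR_valid hk hl v hbase
  have hu : (torusKnotCon k l).mk' u = evalM k l (foldR k l u (0, [])) := (evalM_nf k l u).symm
  have hv : (torusKnotCon k l).mk' v = evalM k l (foldR k l v (0, [])) := (evalM_nf k l v).symm
  rw [hu, hv] at hdeg hπ
  rw [π_evalM π hπA hπB, π_evalM π hπA hπB] at hπ
  have hw : (foldR k l u (0, [])).2 = (foldR k l v (0, [])).2 := piW_inj hpu hpv hπ
  rw [deg_evalM deg hdegA, deg_evalM deg hdegA, hw] at hdeg
  have hn : (foldR k l u (0, [])).1 = (foldR k l v (0, [])).1 := by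
    have hkl : 0 < k * l := Nat.mul_pos (by omega) (by omega)
    exact Nat.eq_of_mul_eq_mul_right hkl (Nat.add_right_cancel hdeg)
  rw [hu, hv, show foldR k l u (0, []) = foldR k l v (0, []) from Prod.ext hn hw]
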